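/- Let h be a nondegenerate metric field on U and let Γ and Γ* be smooth Christoffel maps on U that are mutually dual with respect to h. If Γ and Γ* are both torsion-free, then the cubic field ∇h (formed with Γ) is totally symmetric and the averaged Christoffel map Γ⁰ := (1/2)(Γ + Γ*) is a Levi-Civita connection of h (torsion-free and metric-compatible). (Paper's Proposition 2.1, case (i)+(ii) ⇒ (iii)+(iv), in coordinates.) -/

import Mathlib

noncomputable section

open Set

/-- ℝⁿ. -/
abbrev Vn (n : ℕ) : Type := Fin n → ℝ

/-- Bilinear forms on ℝⁿ (as continuous linear maps). -/
abbrev Biln (n : ℕ) : Type := Vn n →L[ℝ] Vn n →L[ℝ] ℝ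

/-- Christoffel maps (values of a connection). -/
abbrev Chrn (n : ℕ) : Type := Vn n →L[ℝ] Vn n →L[ℝ] Vn n

/-- The cubic field `∇h` formed from a metric field `h` and a Christoffel map `Γ`. -/
def nablaH {n : ℕ} (h : Vn n → Biln n) (Γ : Vn n → Chrn n) (x v w u : Vn n) : ℝ :=
  fderiv ℝ h x v w u - h x (Γ x v w) u - h x w (Γ x v u)

set_option maxHeartbeats 2000000 in
/-- Paper's Proposition 2.1, case (i)+(ii) ⇒ (iii)+(iv):
if `Γ` and `Γ*` are mutually dual w.r.t. a nondegenerate metric field `h`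
and both are torsion-free, then `∇h` is totally symmetric and
`Γ⁰ = (Γ + Γ*)/2` is a Levi-Civita connection of `h`. -/
theorem statement0 {n : ℕ} (hn : 1 ≤ n) (U : Set (Vn n)) (hUopen : IsOpen U)
    (h : Vn n → Biln n) (hsmooth : ContDiffOn ℝ (⊤ : ℕ∞) h U)
    (hsymm : ∀ x ∈ U, ∀ v w : Vn n, h x v w = h x w v)
    (hnondeg : ∀ x ∈ U, ∀ v : Vn n, (∀ w : Vn n, h x v w = 0) → v = 0)
    (Γ Γs : Vn n → Chrn n)
    (hΓsmooth : ContDiffOn ℝ (⊤ : ℕ∞) Γ U) (hΓssmooth : ContDiffOn ℝ (⊤ : ℕ∞) Γs U)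
    (hdual : ∀ x ∈ U, ∀ v w u : Vn n,
      fderiv ℝ h x v w u = h x (Γ x v w) u + h x w (Γs x v u))
    (hΓtf : ∀ x ∈ U, ∀ v w : Vn n, Γ x v w = Γ x w v)
    (hΓstf : ∀ x ∈ U, ∀ v w : Vn n, Γs x v w = Γs x w v) :
    -- (iii) ∇h is totally symmetric
    (∀ x ∈ U, ∀ v w u : Vn n,
        nablaH h Γ x v w u = nablaH h Γ x w v u ∧
        nablaH h Γ x v w u = nablaH h Γ x v u w) ∧
    -- (iv) Γ⁰ = (Γ + Γ*)/2 is torsion-free …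
    (∀ x ∈ U, ∀ v w : Vn n,
        ((1:ℝ)/2) • (Γ x v w + Γs x v w) = ((1:ℝ)/2) • (Γ x w v + Γs x w v)) ∧
    -- … and metric-compatible, i.e. it is a Levi-Civita connection of h
    (∀ x ∈ U, ∀ v w u : Vn n,
        fderiv ℝ h x v w u
          = h x (((1:ℝ)/2) • (Γ x v w + Γs x v w)) u
            + h x w (((1:ℝ)/2) • (Γ x v u + Γs x v u))) := by
  have hdiff : ∀ x ∈ U, DifferentiableAt ℝ h x := fun x hx =>
    (hsmooth.contDiffAt (hUopen.mem_nhds hx)).differentiableAt (by simp)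
  -- symmetry of the derivative of h in its last two slots
  have hDsymm : ∀ x ∈ U, ∀ v w u : Vn n,
      fderiv ℝ h x v w u = fderiv ℝ h x v u w := by
    intro x hx v w u
    have A1 := ((ContinuousLinearMap.apply ℝ ℝ u).hasFDerivAt.comp x
      ((ContinuousLinearMap.apply ℝ (Vn n →L[ℝ] ℝ) w).hasFDerivAt.comp (f := h) x
        (hdiff x hx).hasFDerivAt)).fderiv
    have A2 := ((ContinuousLinearMap.apply ℝ ℝ w).hasFDerivAt.comp x
      ((ContinuousLinearMap.apply ℝ (Vn n →L[ℝ] ℝ) u).hasFDerivAt.comp (f := h) x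
        (hdiff x hx).hasFDerivAt)).fderiv
    have heq : (⇑(ContinuousLinearMap.apply ℝ ℝ u) ∘
          ⇑(ContinuousLinearMap.apply ℝ (Vn n →L[ℝ] ℝ) w) ∘ h)
        =ᶠ[nhds x] (⇑(ContinuousLinearMap.apply ℝ ℝ w) ∘
          ⇑(ContinuousLinearMap.apply ℝ (Vn n →L[ℝ] ℝ) u) ∘ h) := by
      filter_upwards [hUopen.mem_nhds hx] with y hy
      simp only [Function.comp, ContinuousLinearMap.apply_apply]
      exact hsymm y hy w u
    have key := heq.fderiv_eq (𝕜 := ℝ)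
    rw [A1, A2] at key
    have := ContinuousLinearMap.ext_iff.mp key v
    simpa using this
  -- the key identity (*)
  have star : ∀ x ∈ U, ∀ v w u : Vn n,
      h x (Γ x v w) u + h x w (Γs x v u) = h x (Γ x v u) w + h x u (Γs x v w) := by
    intro x hx v w u
    rw [← hdual x hx v w u, ← hdual x hx v u w, hDsymm x hx v w u]
  -- difference form
  have hb : ∀ x ∈ U, ∀ v w u : Vn n,
      h x w (Γs x v u) - h x w (Γ x v u) = h x u (Γs x v w) - h x u (Γ x v w) := by
    intro x hx v w u
    have hst := star x hx v w u
    have e1 : h x (Γ x v w) u = h x u (Γ x v w) := hsymm x hx _ _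
    have e2 : h x (Γ x v u) w = h x w (Γ x v u) := hsymm x hx _ _
    linarith
  have hnab : ∀ x ∈ U, ∀ v w u : Vn n,
      nablaH h Γ x v w u = h x w (Γs x v u) - h x w (Γ x v u) := by
    intro x hx v w u
    unfold nablaH
    rw [hdual x hx]
    ring
  refine ⟨?_, ?_, ?_⟩
  · intro x hx v w u
    constructor
    · rw [hnab x hx, hnab x hx]
      have h1 := hb x hx w v u
      have h2 : Γs x w u = Γs x u w := hΓstf x hx w u
      have h3 : Γ x w u = Γ x u w := hΓtf x hx w u
      have h4 : Γs x w v = Γs x v w := hΓstf x hx w v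
      have h5 : Γ x w v = Γ x v w := hΓtf x hx w v
      rw [h4, h5] at h1
      have h6 := hb x hx v u w
      linarith
    · rw [hnab x hx, hnab x hx]
      exact hb x hx v w u
  · intro x hx v w
    rw [hΓtf x hx v w, hΓstf x hx v w]
  · intro x hx v w u
    have hst := star x hx v w u
    have hd := hdual x hx v w u
    have e1 : h x (Γ x v u) w = h x w (Γ x v u) := hsymm x hx _ _
    have e2 : h x u (Γs x v w) = h x (Γs x v w) u := hsymm x hx _ _
    have expand1 : h x (((1:ℝ)/2) • (Γ x v w + Γs x v w)) u
        = ((1:ℝ)/2) * (h x (Γ x v w) u + h x (Γs x v w) u) := by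
      rw [map_smul, map_add]
      simp [smul_eq_mul]
      ring
    have expand2 : h x w (((1:ℝ)/2) • (Γ x v u + Γs x v u))
        = ((1:ℝ)/2) * (h x w (Γ x v u) + h x w (Γs x v u)) := by
      rw [map_smul, map_add, smul_eq_mul]
    rw [expand1, expand2]
    linarith
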